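/- For any partition λ with at most m parts, the sum of dual Grothendieck polynomials g_μ(q_1,…,q_n) over all partitions μ contained in λ equals g_λ(1, q_1, …, q_n) (the branching relation). -/

import Mathlib

open scoped BigOperators

/-- A plane partition: an ℕ-matrix (indexed from 0) with finitely many nonzero
entries, weakly decreasing along rows and columns. -/
structure PlanePartition where
  entry : ℕ → ℕ → ℕ
  finite_support : (Function.support fun p : ℕ × ℕ => entry p.1 p.2).Finite
  row_dec : ∀ i j, entry i (j + 1) ≤ entry i j
  col_dec : ∀ i j, entry (i + 1) j ≤ entry i j

/-- `c_ℓ(π)`: the number of columns of `π` containing the entry `ℓ`. -/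
noncomputable def colCount (π : PlanePartition) (ℓ : ℕ) : ℕ :=
  {j | ∃ i, π.entry i j = ℓ}.ncard

/-- `d_{iℓ}`: the number of columns `j` with `π_{ij} = ℓ > π_{i+1,j}` (row `i` indexed from 0,
`ℓ` an actual entry value). -/
noncomputable def dstat (π : PlanePartition) (i ℓ : ℕ) : ℕ :=
  {j | π.entry i j = ℓ ∧ π.entry (i + 1) j < ℓ}.ncard

/-- `λ_k`: the number of positive entries in row `k` (indexed from 0) of `π`. -/
noncomputable def part (π : PlanePartition) (k : ℕ) : ℕ :=
  {j | 0 < π.entry k j}.ncard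

/-- `π` has shape `λ` (with `λ : ℕ → ℕ` indexed from 0). -/
def HasShape (π : PlanePartition) (lam : ℕ → ℕ) : Prop :=
  ∀ k, part π k = lam k

/-- `λ` is an integer partition with at most `m` parts (indexed from 0). -/
def IsPartWithParts (m : ℕ) (lam : ℕ → ℕ) : Prop :=
  Antitone lam ∧ ∀ i, m ≤ i → lam i = 0

/-- The dual Grothendieck polynomial
`g_λ(x_1,…,x_n) = Σ_{π : sh(π) = λ, entries ≤ n} ∏_i x_i^{c_i(π)}`. -/
noncomputable def dualG (lam : ℕ → ℕ) (n : ℕ) (x : Fin n → ℝ) : ℝ :=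
  ∑' π : {π : PlanePartition // HasShape π lam ∧ ∀ i j, π.entry i j ≤ n},
    ∏ ℓ : Fin n, x ℓ ^ colCount π.1 (ℓ.1 + 1)

/-- A unit step of a directed lattice path. -/
def IsStep (a b : ℕ × ℕ) : Prop :=
  b = (a.1 + 1, a.2) ∨ b = (a.1, a.2 + 1)

/-- `p` is a directed lattice path from `s` to `t`. -/
def IsDirPath (p : List (ℕ × ℕ)) (s t : ℕ × ℕ) : Prop :=
  p.head? = some s ∧ p.getLast? = some t ∧ p.Chain' IsStep

/-- The sum of the weights `W` along the path `p`. -/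
def pathSum (W : ℕ → ℕ → ℕ) (p : List (ℕ × ℕ)) : ℕ :=
  (p.map fun a => W a.1 a.2).sum

/-- Last-passage time from `s` to `(m, n)` for the weight matrix `W` (1-indexed). -/
noncomputable def lpt (W : ℕ → ℕ → ℕ) (s : ℕ × ℕ) (m n : ℕ) : ℕ :=
  sSup {v | ∃ p, IsDirPath p s (m, n) ∧ v = pathSum W p}

/-- Extend an `m × n` matrix (indexed from 0) to a 1-indexed matrix on `ℕ × ℕ`, zero outside. -/
def ext (m n : ℕ) (w : Fin m → Fin n → ℕ) : ℕ → ℕ → ℕ := fun i j =>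
  if hi : i - 1 < m then if hj : j - 1 < n then w ⟨i - 1, hi⟩ ⟨j - 1, hj⟩ else 0 else 0

/-- Probability weight of a fixed `m × n` matrix of outcomes under independent geometric
entries: entry in column `ℓ` takes value `k` with probability `(1 - q_ℓ) q_ℓ^k`. -/
noncomputable def geomWt {m n : ℕ} (q : Fin n → ℝ) (w : Fin m → Fin n → ℕ) : ℝ :=
  ∏ i : Fin m, ∏ ℓ : Fin n, (1 - q ℓ) * q ℓ ^ w i ℓ

/-- Probability of an event `E` for an `m × n` matrix of independent geometric entries
with column parameters `q`. -/
noncomputable def geomProb {m n : ℕ} (q : Fin n → ℝ) (E : Set (Fin m → Fin n → ℕ)) : ℝ :=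
  ∑' w : E, geomWt q w.1

/-- The complete homogeneous symmetric polynomial `h_a(x_1,…,x_N)`: the sum of all
monomials of degree `a`. -/
noncomputable def hpoly (a N : ℕ) (x : Fin N → ℝ) : ℝ :=
  ∑ f ∈ Finset.univ.filter (fun f : Fin a → Fin N => ∀ i j, i ≤ j → f i ≤ f j),
    ∏ t, x (f t)

/-- `h` with an integer index, vanishing for negative degrees. -/
noncomputable def hpolyZ (a : ℤ) (N : ℕ) (x : Fin N → ℝ) : ℝ :=
  if 0 ≤ a then hpoly a.toNat N x else 0

/-- The Schur polynomial of `λ` (at most `m` parts) via the Jacobi–Trudi determinant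
`s_λ = det[h_{λ_i - i + j}]_{i,j=1}^m`. -/
noncomputable def schur (lam : ℕ → ℕ) (m N : ℕ) (x : Fin N → ℝ) : ℝ :=
  Matrix.det (Matrix.of fun i j : Fin m =>
    hpolyZ ((lam i.1 : ℤ) - (i.1 + 1) + (j.1 + 1)) N x)

/-- The rectangular partition `(a^m)` as a function `ℕ → ℕ`. -/
def rectPart (a m : ℕ) : ℕ → ℕ := fun k => if k < m then a else 0

/-! ### Auxiliary material for the branching relation -/

namespace Stmt7Aux

theorem pp_ext' {π π' : PlanePartition} (h : π.entry = π'.entry) : π = π' := by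
  cases π; cases π'; simp_all

theorem row_anti (π : PlanePartition) (i : ℕ) : Antitone fun j => π.entry i j :=
  antitone_nat_of_succ_le (π.row_dec i)

theorem rowset_finite (π : PlanePartition) (i c : ℕ) : {j | c < π.entry i j}.Finite := by
  have hsub : {j | c < π.entry i j} ⊆
      (fun j => ((i, j) : ℕ × ℕ)) ⁻¹'
        (Function.support fun p : ℕ × ℕ => π.entry p.1 p.2) := by
    intro j hj
    simp only [Set.mem_setOf_eq] at hj
    simp only [Set.mem_preimage, Function.mem_support]
    omega
  exact (π.finite_support.preimage (by intro a _ b _ h; simpa using h)).subset hsub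

theorem mem_iff_lt_ncard {s : Set ℕ} (hs : s.Finite)
    (hd : ∀ a b, a ≤ b → b ∈ s → a ∈ s) (j : ℕ) : j ∈ s ↔ j < s.ncard := by
  constructor
  · intro hj
    have h1 : Set.Iic j ⊆ s := fun a ha => hd a j ha hj
    have h2 := Set.ncard_le_ncard h1 hs
    have h3 : (Set.Iic j).ncard = j + 1 := by
      rw [Set.ncard_eq_toFinset_card']; simp
    omega
  · intro hj
    by_contra hjs
    have h1 : s ⊆ Set.Iio j := by
      intro a ha
      by_contra h
      rw [Set.mem_Iio, not_lt] at h
      exact hjs (hd j a h ha)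
    have h2 := Set.ncard_le_ncard h1 (Set.finite_Iio j)
    have h3 : (Set.Iio j).ncard = j := by
      rw [Set.ncard_eq_toFinset_card']; simp
    omega

theorem entry_pos_iff (π : PlanePartition) (i j : ℕ) :
    0 < π.entry i j ↔ j < part π i :=
  mem_iff_lt_ncard (rowset_finite π i 0)
    (fun a b hab hb => lt_of_lt_of_le hb (row_anti π i hab)) j

/-- Decrease all entries of a plane partition by one. -/
def drop (π : PlanePartition) : PlanePartition where
  entry i j := π.entry i j - 1
  finite_support := π.finite_support.subset (by
    intro p hp
    simp only [Function.mem_support] at hp ⊢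
    omega)
  row_dec i j := by
    show π.entry i (j + 1) - 1 ≤ π.entry i j - 1
    have := π.row_dec i j; omega
  col_dec i j := by
    show π.entry (i + 1) j - 1 ≤ π.entry i j - 1
    have := π.col_dec i j; omega

/-- Increase by one all entries inside the shape `lam`. -/
def lift (lam : ℕ → ℕ) (m : ℕ) (hm : ∀ i, m ≤ i → lam i = 0) (hanti : Antitone lam)
    (π : PlanePartition) : PlanePartition where
  entry i j := if j < lam i then π.entry i j + 1 else 0
  finite_support := by
    apply Set.Finite.subset ((Set.finite_Iio m).prod (Set.finite_Iio (lam 0)))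
    intro p hp
    simp only [Function.mem_support, ne_eq] at hp
    by_cases h : p.2 < lam p.1
    · simp only [Set.mem_prod, Set.mem_Iio]
      constructor
      · by_contra hmm
        push_neg at hmm
        rw [hm p.1 hmm] at h
        omega
      · exact lt_of_lt_of_le h (hanti (Nat.zero_le _))
    · simp [h] at hp
  row_dec i j := by
    by_cases h1 : j + 1 < lam i
    · have h0 : j < lam i := by omega
      simp only [h1, h0, if_true]
      exact Nat.succ_le_succ (π.row_dec i j)
    · simp [h1]
  col_dec i j := by
    by_cases h1 : j < lam (i + 1)
    · have h0 : j < lam i := lt_of_lt_of_le h1 (hanti (Nat.le_succ i))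
      simp only [h1, h0, if_true]
      exact Nat.succ_le_succ (π.col_dec i j)
    · simp [h1]

/-- The shape of `drop π`. -/
noncomputable def muOf (π : PlanePartition) (k : ℕ) : ℕ := part (drop π) k

theorem hasShape_drop (π : PlanePartition) : HasShape (drop π) (muOf π) := fun _ => rfl

theorem muOf_anti (π : PlanePartition) : Antitone (muOf π) := by
  apply antitone_nat_of_succ_le
  intro k
  apply Set.ncard_le_ncard
  · intro j hj
    simp only [Set.mem_setOf_eq, drop] at hj ⊢
    have := π.col_dec k j
    omega
  · exact rowset_finite (drop π) k 0

theorem muOf_le (π : PlanePartition) (lam : ℕ → ℕ) (hs : HasShape π lam) (i : ℕ) :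
    muOf π i ≤ lam i := by
  rw [← hs i]
  apply Set.ncard_le_ncard
  · intro j hj
    simp only [Set.mem_setOf_eq, drop] at hj ⊢
    omega
  · exact rowset_finite π i 0

theorem drop_lift (lam : ℕ → ℕ) (m : ℕ) (hm : ∀ i, m ≤ i → lam i = 0)
    (hanti : Antitone lam) (π : PlanePartition)
    (h0 : ∀ i j, lam i ≤ j → π.entry i j = 0) :
    drop (lift lam m hm hanti π) = π := by
  apply pp_ext'
  funext i j
  show (if j < lam i then π.entry i j + 1 else 0) - 1 = π.entry i j
  by_cases h : j < lam i
  · simp [h]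
  · simp [h, h0 i j (le_of_not_gt h)]

theorem lift_drop (lam : ℕ → ℕ) (m : ℕ) (hm : ∀ i, m ≤ i → lam i = 0)
    (hanti : Antitone lam) (π : PlanePartition) (hs : HasShape π lam) :
    lift lam m hm hanti (drop π) = π := by
  apply pp_ext'
  funext i j
  show (if j < lam i then π.entry i j - 1 + 1 else 0) = π.entry i j
  have hp := entry_pos_iff π i j
  rw [hs i] at hp
  by_cases h : j < lam i
  · have h1 : 0 < π.entry i j := hp.mpr h
    simp only [h, if_true]
    omega
  · have h1 : π.entry i j = 0 := by
      by_contra h2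
      exact h (hp.mp (Nat.pos_of_ne_zero h2))
    simp [h, h1]

theorem part_lift (lam : ℕ → ℕ) (m : ℕ) (hm : ∀ i, m ≤ i → lam i = 0)
    (hanti : Antitone lam) (π : PlanePartition) :
    HasShape (lift lam m hm hanti π) lam := by
  intro k
  unfold part
  have hset : {j | 0 < (lift lam m hm hanti π).entry k j} = Set.Iio (lam k) := by
    ext j
    simp only [Set.mem_setOf_eq, Set.mem_Iio]
    show 0 < (if j < lam k then π.entry k j + 1 else 0) ↔ j < lam k
    by_cases h : j < lam k <;> simp [h]
  rw [hset, Set.ncard_eq_toFinset_card']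
  simp

theorem colCount_drop (π : PlanePartition) (ℓ : ℕ) :
    colCount (drop π) (ℓ + 1) = colCount π (ℓ + 2) := by
  unfold colCount
  congr 1
  ext j
  exact exists_congr fun i => by
    show π.entry i j - 1 = ℓ + 1 ↔ π.entry i j = ℓ + 2
    omega

theorem finite_pp (n R B : ℕ) (ν : ℕ → ℕ) (h1 : ∀ i, R ≤ i → ν i = 0)
    (h2 : ∀ i, ν i ≤ B) :
    Finite {π : PlanePartition // HasShape π ν ∧ ∀ i j, π.entry i j ≤ n} := by
  have key : ∀ (τ : {π : PlanePartition // HasShape π ν ∧ ∀ i j, π.entry i j ≤ n})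
      (i j : ℕ), ¬(i < R ∧ j < B) → τ.1.entry i j = 0 := by
    intro τ i j hij
    by_contra h0
    have hpos : 0 < τ.1.entry i j := Nat.pos_of_ne_zero h0
    have hlt := (entry_pos_iff τ.1 i j).mp hpos
    rw [τ.2.1 i] at hlt
    have hiR : i < R := by
      by_contra hR
      rw [h1 i (le_of_not_gt hR)] at hlt
      omega
    have := h2 i
    omega
  apply Finite.of_injective (fun τ : {π : PlanePartition // HasShape π ν ∧
      ∀ i j, π.entry i j ≤ n} =>
    fun p : Fin R × Fin B => (⟨τ.1.entry p.1 p.2, Nat.lt_succ_of_le (τ.2.2 _ _)⟩ : Fin (n + 1)))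
  intro τ σ h
  apply Subtype.ext
  apply pp_ext'
  funext i j
  by_cases hij : i < R ∧ j < B
  · have := congrFun h (⟨i, hij.1⟩, ⟨j, hij.2⟩)
    simpa using this
  · rw [key τ i j hij, key σ i j hij]

theorem finite_mu (m : ℕ) (lam : ℕ → ℕ) (hanti : Antitone lam)
    (hm : ∀ i, m ≤ i → lam i = 0) :
    Finite {μ : ℕ → ℕ // Antitone μ ∧ ∀ i, μ i ≤ lam i} := by
  have key : ∀ (μ : {μ : ℕ → ℕ // Antitone μ ∧ ∀ i, μ i ≤ lam i}) (i : ℕ),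
      ¬ i < m → μ.1 i = 0 := by
    intro μ i hi
    have := μ.2.2 i
    rw [hm i (le_of_not_gt hi)] at this
    omega
  apply Finite.of_injective (fun μ : {μ : ℕ → ℕ // Antitone μ ∧ ∀ i, μ i ≤ lam i} =>
    fun i : Fin m => (⟨μ.1 i, Nat.lt_succ_of_le
      (le_trans (μ.2.2 i) (hanti (Nat.zero_le i)))⟩ : Fin (lam 0 + 1)))
  intro μ ν h
  apply Subtype.ext
  funext i
  by_cases hi : i < m
  · simpa using congrFun h ⟨i, hi⟩
  · rw [key μ i hi, key ν i hi]

/-- The forward map of the branching bijection: pair `(μ ⊆ λ, π' of shape μ)` to a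
plane partition of shape `λ` by adding one inside `λ`. -/
def F (m n : ℕ) (lam : ℕ → ℕ) (hanti : Antitone lam) (hm : ∀ i, m ≤ i → lam i = 0) :
    (Σ μ : {μ : ℕ → ℕ // Antitone μ ∧ ∀ i, μ i ≤ lam i},
      {π : PlanePartition // HasShape π μ.1 ∧ ∀ i j, π.entry i j ≤ n}) →
    {π : PlanePartition // HasShape π lam ∧ ∀ i j, π.entry i j ≤ n + 1} := fun p =>
  ⟨lift lam m hm hanti p.2.1, part_lift lam m hm hanti p.2.1, fun i j => by
    show (if j < lam i then p.2.1.entry i j + 1 else 0) ≤ n + 1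
    by_cases h : j < lam i
    · simp only [h, if_true]
      exact Nat.succ_le_succ (p.2.2.2 i j)
    · simp [h]⟩

theorem hzero (m n : ℕ) (lam : ℕ → ℕ)
    (p : Σ μ : {μ : ℕ → ℕ // Antitone μ ∧ ∀ i, μ i ≤ lam i},
      {π : PlanePartition // HasShape π μ.1 ∧ ∀ i j, π.entry i j ≤ n})
    (i j : ℕ) (hij : lam i ≤ j) : p.2.1.entry i j = 0 := by
  by_contra h0
  have h1 := (entry_pos_iff p.2.1 i j).mp (Nat.pos_of_ne_zero h0)
  rw [p.2.2.1 i] at h1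
  have := p.1.2.2 i
  omega

theorem hdl (m n : ℕ) (lam : ℕ → ℕ) (hanti : Antitone lam) (hm : ∀ i, m ≤ i → lam i = 0)
    (p : Σ μ : {μ : ℕ → ℕ // Antitone μ ∧ ∀ i, μ i ≤ lam i},
      {π : PlanePartition // HasShape π μ.1 ∧ ∀ i j, π.entry i j ≤ n}) :
    drop (F m n lam hanti hm p).1 = p.2.1 :=
  drop_lift lam m hm hanti p.2.1 (hzero m n lam p)

theorem F_bijective (m n : ℕ) (lam : ℕ → ℕ) (hanti : Antitone lam)
    (hm : ∀ i, m ≤ i → lam i = 0) : Function.Bijective (F m n lam hanti hm) := by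
  constructor
  · rintro ⟨μ₁, π₁⟩ ⟨μ₂, π₂⟩ h
    have h1 : π₁.1 = π₂.1 := by
      have h2 : drop (F m n lam hanti hm ⟨μ₁, π₁⟩).1 =
          drop (F m n lam hanti hm ⟨μ₂, π₂⟩).1 := by rw [h]
      rwa [hdl m n lam hanti hm ⟨μ₁, π₁⟩, hdl m n lam hanti hm ⟨μ₂, π₂⟩] at h2
    have hμ : μ₁ = μ₂ := by
      apply Subtype.ext
      funext k
      rw [← π₁.2.1 k, ← π₂.2.1 k, h1]
    subst hμ
    simp only [Sigma.mk.inj_iff, heq_eq_eq, true_and]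
    exact Subtype.ext h1
  · rintro ⟨π, hshape, hbound⟩
    refine ⟨⟨⟨muOf π, muOf_anti π, fun i => muOf_le π lam hshape i⟩,
      ⟨drop π, hasShape_drop π, fun i j => by
        show π.entry i j - 1 ≤ n
        have := hbound i j
        omega⟩⟩, ?_⟩
    exact Subtype.ext (lift_drop lam m hm hanti π hshape)

end Stmt7Aux

/-- branching relation: for a partition `λ` with at most `m` parts,
`Σ_{μ ⊆ λ} g_μ(q_1,…,q_n) = g_λ(1, q_1, …, q_n)`. -/
theorem stmt7 (m n : ℕ) (lam : ℕ → ℕ) (hlam : IsPartWithParts m lam)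
    (q : Fin n → ℝ) :
    ∑' μ : {μ : ℕ → ℕ // Antitone μ ∧ ∀ i, μ i ≤ lam i}, dualG μ.1 n q =
      dualG lam (n + 1) (Fin.cons 1 q) := by
  classical
  obtain ⟨hanti, hm⟩ := hlam
  haveI hA : Finite {μ : ℕ → ℕ // Antitone μ ∧ ∀ i, μ i ≤ lam i} :=
    Stmt7Aux.finite_mu m lam hanti hm
  haveI hT : ∀ μ : {μ : ℕ → ℕ // Antitone μ ∧ ∀ i, μ i ≤ lam i},
      Finite {π : PlanePartition // HasShape π μ.1 ∧ ∀ i j, π.entry i j ≤ n} := fun μ =>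
    Stmt7Aux.finite_pp n m (lam 0) μ.1
      (fun i hi => by have := μ.2.2 i; rw [hm i hi] at this; omega)
      (fun i => le_trans (μ.2.2 i) (hanti (Nat.zero_le i)))
  haveI hU : Finite {π : PlanePartition // HasShape π lam ∧ ∀ i j, π.entry i j ≤ n + 1} :=
    Stmt7Aux.finite_pp (n + 1) m (lam 0) lam hm (fun i => hanti (Nat.zero_le i))
  have hsummable : Summable (fun p : (Σ μ : {μ : ℕ → ℕ // Antitone μ ∧ ∀ i, μ i ≤ lam i},
      {π : PlanePartition // HasShape π μ.1 ∧ ∀ i j, π.entry i j ≤ n}) =>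
      ∏ ℓ : Fin n, q ℓ ^ colCount p.2.1 (ℓ.1 + 1)) := Summable.of_finite
  let e := Equiv.ofBijective _ (Stmt7Aux.F_bijective m n lam hanti hm)
  calc ∑' μ : {μ : ℕ → ℕ // Antitone μ ∧ ∀ i, μ i ≤ lam i}, dualG μ.1 n q
      = ∑' μ : {μ : ℕ → ℕ // Antitone μ ∧ ∀ i, μ i ≤ lam i},
          ∑' π' : {π : PlanePartition // HasShape π μ.1 ∧ ∀ i j, π.entry i j ≤ n},
          ∏ ℓ : Fin n, q ℓ ^ colCount π'.1 (ℓ.1 + 1) := rfl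
    _ = ∑' p : (Σ μ : {μ : ℕ → ℕ // Antitone μ ∧ ∀ i, μ i ≤ lam i},
          {π : PlanePartition // HasShape π μ.1 ∧ ∀ i j, π.entry i j ≤ n}),
          ∏ ℓ : Fin n, q ℓ ^ colCount p.2.1 (ℓ.1 + 1) := (Summable.tsum_sigma hsummable).symm
    _ = ∑' p : (Σ μ : {μ : ℕ → ℕ // Antitone μ ∧ ∀ i, μ i ≤ lam i},
          {π : PlanePartition // HasShape π μ.1 ∧ ∀ i j, π.entry i j ≤ n}),
          ∏ ℓ : Fin (n + 1), (Fin.cons 1 q : Fin (n + 1) → ℝ) ℓ ^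
            colCount (e p).1 (ℓ.1 + 1) := by
        apply tsum_congr
        intro p
        rw [Fin.prod_univ_succ]
        simp only [Fin.cons_zero, Fin.cons_succ, one_pow, one_mul, Fin.val_succ]
        apply Finset.prod_congr rfl
        intro ℓ _
        congr 1
        have he : (e p).1 = (Stmt7Aux.F m n lam hanti hm p).1 := rfl
        rw [he, ← Stmt7Aux.hdl m n lam hanti hm p, Stmt7Aux.colCount_drop]
    _ = ∑' π : {π : PlanePartition // HasShape π lam ∧ ∀ i j, π.entry i j ≤ n + 1},
          ∏ ℓ : Fin (n + 1), (Fin.cons 1 q : Fin (n + 1) → ℝ) ℓ ^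
            colCount π.1 (ℓ.1 + 1) :=
        Equiv.tsum_eq e (fun π : {π : PlanePartition // HasShape π lam ∧
          ∀ i j, π.entry i j ≤ n + 1} =>
          ∏ ℓ : Fin (n + 1), (Fin.cons 1 q : Fin (n + 1) → ℝ) ℓ ^ colCount π.1 (ℓ.1 + 1))
    _ = dualG lam (n + 1) (Fin.cons 1 q) := rfl
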